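/- Define s : ℕ → ℚ by s(1) = 0, s(2n) = a(n), s(2n+1) = −a(n) for n ≥ 1. Then s is a bijection from the positive integers onto the rational numbers. -/

import Mathlib

theorem stmt18 (a : ℕ → ℚ) (h1 : a 1 = 1)
    (h2 : ∀ n : ℕ, 1 ≤ n → a (2 * n) = a n + 1)
    (h3 : ∀ n : ℕ, 1 ≤ n → a (2 * n + 1) = 1 / a (2 * n))
    (s : ℕ → ℚ) (hs1 : s 1 = 0)
    (hs2 : ∀ n : ℕ, 1 ≤ n → s (2 * n) = a n)
    (hs3 : ∀ n : ℕ, 1 ≤ n → s (2 * n + 1) = - a n) :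
    Set.BijOn s {n : ℕ | 1 ≤ n} (Set.univ : Set ℚ) := by
  -- positivity of a
  have pos : ∀ n, 1 ≤ n → 0 < a n := by
    intro n
    induction n using Nat.strong_induction_on with
    | _ n ih =>
      intro hn
      rcases eq_or_lt_of_le hn with h | h
      · rw [← h, h1]; norm_num
      · have key : n = 2*(n/2) ∨ n = 2*(n/2)+1 := by omega
        have hm1 : 1 ≤ n/2 := by omega
        have hmlt : n/2 < n := by omega
        have hpos := ih (n/2) hmlt hm1
        rcases key with hk | hk
        · rw [hk, h2 _ hm1]; linarith
        · rw [hk, h3 _ hm1, h2 _ hm1]; positivity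
  have gt1 : ∀ m, 1 ≤ m → 1 < a (2*m) := by
    intro m hm; rw [h2 m hm]; have := pos m hm; linarith
  have lt1 : ∀ m, 1 ≤ m → a (2*m+1) < 1 := by
    intro m hm
    rw [h3 m hm]
    have := gt1 m hm
    rw [div_lt_one (by linarith)]
    linarith
  have aone : ∀ n, 1 ≤ n → a n = 1 → n = 1 := by
    intro n hn han
    by_contra hne
    have h2le : 2 ≤ n := by omega
    have key : n = 2*(n/2) ∨ n = 2*(n/2)+1 := by omega
    have hm1 : 1 ≤ n/2 := by omega
    rcases key with hk | hk
    · have := gt1 (n/2) hm1; rw [← hk] at this; linarith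
    · have := lt1 (n/2) hm1; rw [← hk] at this; linarith
  -- injectivity of a
  have ainj : ∀ m, 1 ≤ m → ∀ k, 1 ≤ k → a m = a k → m = k := by
    intro m
    induction m using Nat.strong_induction_on with
    | _ m ih =>
      intro hm k hk he
      by_cases hm1 : m = 1
      · subst hm1; rw [h1] at he; exact (aone k hk he.symm).symm
      · have hm2 : 2 ≤ m := by omega
        have hk1 : k ≠ 1 := by
          intro h; subst h; rw [h1] at he; exact hm1 (aone m hm he)
        have hk2 : 2 ≤ k := by omega
        have hmd : m = 2*(m/2) ∨ m = 2*(m/2)+1 := by omega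
        have hkd : k = 2*(k/2) ∨ k = 2*(k/2)+1 := by omega
        have hm' : 1 ≤ m/2 := by omega
        have hk' : 1 ≤ k/2 := by omega
        rcases hmd with hmd | hmd <;> rcases hkd with hkd | hkd
        · rw [hmd, hkd, h2 _ hm', h2 _ hk'] at he
          have := ih (m/2) (by omega) hm' (k/2) hk' (by linarith)
          omega
        · exfalso
          rw [hmd, hkd] at he
          have ha := gt1 (m/2) hm'
          have hb := lt1 (k/2) hk'
          linarith
        · exfalso
          rw [hmd, hkd] at he
          have ha := lt1 (m/2) hm'
          have hb := gt1 (k/2) hk'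
          linarith
        · rw [hmd, hkd, h3 _ hm', h3 _ hk'] at he
          have hp := gt1 (m/2) hm'
          have hq := gt1 (k/2) hk'
          have heq : a (2*(m/2)) = a (2*(k/2)) := by
            field_simp at he
            linarith
          have := ih (2*(m/2)) (by omega) (by omega) (2*(k/2)) (by omega) heq
          omega
  -- surjectivity onto positive rationals
  have asurj : ∀ N p d : ℕ, 0 < p → 0 < d → p + d ≤ N →
      ∃ n, 1 ≤ n ∧ a n = (p:ℚ)/d := by
    intro N
    induction N with
    | zero => intro p d hp hd h; omega
    | succ N ih =>
      intro p d hp hd h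
      have hp0 : (p:ℚ) ≠ 0 := Nat.cast_ne_zero.mpr (by omega)
      have hd0 : (d:ℚ) ≠ 0 := Nat.cast_ne_zero.mpr (by omega)
      rcases lt_trichotomy p d with hlt | heq | hgt
      · obtain ⟨m, hm1, hm2⟩ := ih (d - p) p (by omega) hp (by omega)
        refine ⟨2*m+1, by omega, ?_⟩
        rw [h3 m hm1, h2 m hm1, hm2, Nat.cast_sub (by omega)]
        have hstep : ((d:ℚ) - p)/p + 1 = (d:ℚ)/p := by field_simp; ring
        rw [hstep, one_div_div]
      · subst heq
        exact ⟨1, le_refl 1, by rw [h1, div_self hp0]⟩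
      · obtain ⟨m, hm1, hm2⟩ := ih (p - d) d (by omega) hd (by omega)
        refine ⟨2*m, by omega, ?_⟩
        rw [h2 m hm1, hm2, Nat.cast_sub (by omega)]
        field_simp; ring
  have asurjQ : ∀ q : ℚ, 0 < q → ∃ n, 1 ≤ n ∧ a n = q := by
    intro q hq
    obtain ⟨n, hn1, hn2⟩ := asurj (q.num.toNat + q.den) q.num.toNat q.den
      (by have := Rat.num_pos.mpr hq; omega) q.pos (le_refl _)
    refine ⟨n, hn1, ?_⟩
    rw [hn2]
    have hnum : ((q.num.toNat : ℕ) : ℚ) = (q.num : ℚ) := by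
      have hpos := Rat.num_pos.mpr hq
      exact_mod_cast congrArg (Int.cast : ℤ → ℚ) (Int.toNat_of_nonneg hpos.le)
    rw [hnum, Rat.num_div_den]
  -- classification of s values
  have sval : ∀ n : ℕ, 1 ≤ n → (n = 1 ∧ s n = 0) ∨
      (∃ j, 1 ≤ j ∧ n = 2*j ∧ s n = a j) ∨
      (∃ j, 1 ≤ j ∧ n = 2*j+1 ∧ s n = -a j) := by
    intro n hn
    by_cases h : n = 1
    · exact Or.inl ⟨h, by rw [h, hs1]⟩
    · right
      have key : n = 2*(n/2) ∨ n = 2*(n/2)+1 := by omega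
      have hm1 : 1 ≤ n/2 := by omega
      rcases key with hk | hk
      · refine Or.inl ⟨n/2, hm1, hk, ?_⟩
        conv_lhs => rw [hk]
        rw [hs2 _ hm1]
      · refine Or.inr ⟨n/2, hm1, hk, ?_⟩
        conv_lhs => rw [hk]
        rw [hs3 _ hm1]
  refine ⟨fun x _ => trivial, ?_, ?_⟩
  · -- injectivity of s
    intro m hm k hk he
    simp only [Set.mem_setOf_eq] at hm hk
    rcases sval m hm with ⟨hm1, hmv⟩ | ⟨j, hj1, hjm, hjv⟩ | ⟨j, hj1, hjm, hjv⟩ <;>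
      rcases sval k hk with ⟨hk1, hkv⟩ | ⟨i, hi1, him, hiv⟩ | ⟨i, hi1, him, hiv⟩
    · omega
    · exfalso; have := pos i hi1; rw [hmv, hiv] at he; linarith
    · exfalso; have := pos i hi1; rw [hmv, hiv] at he; linarith
    · exfalso; have := pos j hj1; rw [hjv, hkv] at he; linarith
    · rw [hjv, hiv] at he; have := ainj j hj1 i hi1 he; omega
    · exfalso
      have := pos j hj1; have := pos i hi1
      rw [hjv, hiv] at he; linarith
    · exfalso; have := pos j hj1; rw [hjv, hkv] at he; linarith
    · exfalso
      have := pos j hj1; have := pos i hi1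
      rw [hjv, hiv] at he; linarith
    · rw [hjv, hiv] at he
      have heq : a j = a i := by linarith
      have := ainj j hj1 i hi1 heq; omega
  · -- surjectivity of s
    intro q _
    rcases lt_trichotomy q 0 with hq | hq | hq
    · obtain ⟨n, hn1, hn2⟩ := asurjQ (-q) (by linarith)
      exact ⟨2*n+1, by simp only [Set.mem_setOf_eq]; omega,
        by rw [hs3 n hn1, hn2]; ring⟩
    · exact ⟨1, Set.mem_setOf_eq ▸ le_refl 1, by rw [hs1, hq]⟩
    · obtain ⟨n, hn1, hn2⟩ := asurjQ q hq
      exact ⟨2*n, by simp only [Set.mem_setOf_eq]; omega,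
        by rw [hs2 n hn1, hn2]⟩
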